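/- Let S be a Boolean inverse semigroup and I an additive ideal of S. Define (a,b) ∈ ε_I iff there exists c ≤ a,b with a \ c ∈ I and b \ c ∈ I. Then ε_I is a congruence on S whose class of 0 is exactly I, and the quotient map S → S/ε_I is weakly meet preserving. -/
import Mathlib


/-- An inverse semigroup with zero: associative multiplication, unique
generalized inverses, and a multiplicatively absorbing zero. -/
structure InvSemigroupZero (S : Type*) [Mul S] [Inv S] [Zero S] : Prop where
  mul_assoc : ∀ a b c : S, a * b * c = a * (b * c)
  mul_inv_mul : ∀ a : S, a * a⁻¹ * a = a
  inv_mul_inv : ∀ a : S, a⁻¹ * a * a⁻¹ = a⁻¹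
  inv_unique : ∀ a t : S, a * t * a = a → t * a * t = t → t = a⁻¹
  zero_mul : ∀ a : S, 0 * a = 0
  mul_zero : ∀ a : S, a * 0 = 0

def IsIdem {S : Type*} [Mul S] (e : S) : Prop := e * e = e

/-- The natural partial order: `s ≤ t` iff `s = t e` for some idempotent `e`. -/
def natLe {S : Type*} [Mul S] (s t : S) : Prop := ∃ e : S, IsIdem e ∧ s = t * e

/-- `s` and `t` are compatible iff `s⁻¹ t` and `s t⁻¹` are idempotents. -/
def Compat {S : Type*} [Mul S] [Inv S] (s t : S) : Prop :=
  IsIdem (s⁻¹ * t) ∧ IsIdem (s * t⁻¹)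

/-- A Boolean inverse semigroup: an inverse semigroup with zero in which `⊔`
gives the join of any compatible pair, multiplication distributes over such
joins, and `\` gives relative complements (so the idempotents form a
generalized Boolean algebra). -/
structure BooleanInvSemigroup (S : Type*) [Mul S] [Inv S] [Zero S] [Max S] [SDiff S] :
    Prop where
  toInvSemigroupZero : InvSemigroupZero S
  le_sup_left : ∀ a b : S, Compat a b → natLe a (a ⊔ b)
  le_sup_right : ∀ a b : S, Compat a b → natLe b (a ⊔ b)
  sup_le : ∀ a b c : S, Compat a b → natLe a c → natLe b c → natLe (a ⊔ b) c
  mul_sup : ∀ a b c : S, Compat b c → a * (b ⊔ c) = (a * b) ⊔ (a * c)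
  sup_mul : ∀ a b c : S, Compat a b → (a ⊔ b) * c = (a * c) ⊔ (b * c)
  sdiff_le : ∀ a c : S, natLe c a → natLe (a \ c) a
  sdiff_orth : ∀ a c : S, natLe c a → c⁻¹ * (a \ c) = 0 ∧ c * (a \ c)⁻¹ = 0
  sup_sdiff : ∀ a c : S, natLe c a → c ⊔ (a \ c) = a

def dd {S : Type*} [Mul S] [Inv S] (a : S) : S := a⁻¹ * a
def rr {S : Type*} [Mul S] [Inv S] (a : S) : S := a * a⁻¹

/-- The (left) skew difference `a ⊖ b = f a e` where `e = d(a) \ d(a)d(b)` and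
`f = r(b) \ r(a)r(b)`. -/
def skewDiff {S : Type*} [Mul S] [Inv S] [SDiff S] (a b : S) : S :=
  (rr b \ (rr a * rr b)) * a * (dd a \ (dd a * dd b))

/-- The (left) skew join `a ▽ b = (a ⊖ b) ∨ b`. -/
def skewJoin {S : Type*} [Mul S] [Inv S] [SDiff S] [Max S] (a b : S) : S :=
  skewDiff a b ⊔ b

/-- An additive ideal: a nonempty two-sided semigroup ideal closed under
binary compatible joins. -/
def AddIdeal {S : Type*} [Mul S] [Inv S] [Max S] (I : Set S) : Prop :=
  I.Nonempty ∧ (∀ a ∈ I, ∀ s : S, s * a ∈ I ∧ a * s ∈ I) ∧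
    ∀ a ∈ I, ∀ b ∈ I, Compat a b → a ⊔ b ∈ I

/-- The relation `ε_I`: `a ε_I b` iff there is `c ≤ a, b` with
`a \ c, b \ c ∈ I`. -/
def epsI {S : Type*} [Mul S] [SDiff S] (I : Set S) (a b : S) : Prop :=
  ∃ c : S, natLe c a ∧ natLe c b ∧ (a \ c) ∈ I ∧ (b \ c) ∈ I

/-- The natural partial order on the quotient `S/ε_I`:
`[x] ≤ [y]` iff some `x'` with `x ε_I x'` satisfies `x' ≤ y`. -/
def qle {S : Type*} [Mul S] [SDiff S] (I : Set S) (x y : S) : Prop :=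
  ∃ x' : S, epsI I x x' ∧ natLe x' y

section EpsHelpers

variable {S : Type*} [Mul S] [Inv S] [Zero S] [Max S] [SDiff S]

private theorem bas (hS : BooleanInvSemigroup S) : ∀ a b c : S, a * b * c = a * (b * c) :=
  hS.toInvSemigroupZero.mul_assoc

private theorem bmim (hS : BooleanInvSemigroup S) : ∀ a : S, a * a⁻¹ * a = a :=
  hS.toInvSemigroupZero.mul_inv_mul

private theorem bimi (hS : BooleanInvSemigroup S) : ∀ a : S, a⁻¹ * a * a⁻¹ = a⁻¹ :=
  hS.toInvSemigroupZero.inv_mul_inv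

private theorem bzm (hS : BooleanInvSemigroup S) : ∀ a : S, 0 * a = 0 :=
  hS.toInvSemigroupZero.zero_mul

private theorem bmz (hS : BooleanInvSemigroup S) : ∀ a : S, a * 0 = 0 :=
  hS.toInvSemigroupZero.mul_zero

private theorem binv_inv (hS : BooleanInvSemigroup S) (a : S) : a⁻¹⁻¹ = a :=
  (hS.toInvSemigroupZero.inv_unique a⁻¹ a (bimi hS a) (bmim hS a)).symm

private theorem bidem_inv (hS : BooleanInvSemigroup S) {e : S} (he : IsIdem e) : e⁻¹ = e := by
  have := hS.toInvSemigroupZero.inv_unique e e (by rw [he, he]) (by rw [he, he])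
  exact this.symm

private theorem bzero_inv (hS : BooleanInvSemigroup S) : (0 : S)⁻¹ = 0 := by
  have := hS.toInvSemigroupZero.inv_unique 0 0 (by rw [bzm hS, bzm hS]) (by rw [bzm hS, bzm hS])
  exact this.symm

private theorem bidem_pull (hS : BooleanInvSemigroup S) {e : S} (he : IsIdem e) (z : S) :
    e * (e * z) = e * z := by rw [← bas hS, he]

/-- idempotents commute -/
private theorem bidem_comm (hS : BooleanInvSemigroup S) {e f : S} (he : IsIdem e)
    (hf : IsIdem f) : e * f = f * e := by
  have as := bas hS
  -- step 1 : f * (e*f)⁻¹ * e = (e*f)⁻¹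
  have h1 : f * (e * f)⁻¹ * e = (e * f)⁻¹ := by
    apply hS.toInvSemigroupZero.inv_unique (e * f)
    · -- (e*f) * (f * (e*f)⁻¹ * e) * (e*f) = e*f
      have : e * f * (f * (e * f)⁻¹ * e) * (e * f)
          = e * f * (e * f)⁻¹ * (e * f) := by
        simp only [as]
        rw [bidem_pull hS hf, ← as e e, he]
      rw [this, bmim hS]
    · have : f * (e * f)⁻¹ * e * (e * f) * (f * (e * f)⁻¹ * e)
          = f * ((e * f)⁻¹ * (e * f) * (e * f)⁻¹) * e := by
        simp only [as]
        rw [bidem_pull hS he, bidem_pull hS hf]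
      rw [this, bimi hS]
  -- step 2 : (e*f)⁻¹ is idempotent
  have h2 : IsIdem (e * f)⁻¹ := by
    unfold IsIdem
    conv_lhs => rw [← h1]
    have : f * (e * f)⁻¹ * e * (f * (e * f)⁻¹ * e)
        = f * ((e * f)⁻¹ * (e * f) * (e * f)⁻¹) * e := by
      simp only [as]
    rw [this, bimi hS, h1]
  -- step 3 : e*f is idempotent
  have h3 : IsIdem (e * f) := by
    have := bidem_inv hS h2
    rw [binv_inv hS] at this
    rw [this]; exact h2
  have h4 : IsIdem (f * e) := by
    -- same argument with roles swapped: reuse by symmetry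
    have h1' : e * (f * e)⁻¹ * f = (f * e)⁻¹ := by
      apply hS.toInvSemigroupZero.inv_unique (f * e)
      · have : f * e * (e * (f * e)⁻¹ * f) * (f * e)
            = f * e * (f * e)⁻¹ * (f * e) := by
          simp only [as]
          rw [bidem_pull hS he, ← as f f, hf]
        rw [this, bmim hS]
      · have : e * (f * e)⁻¹ * f * (f * e) * (e * (f * e)⁻¹ * f)
            = e * ((f * e)⁻¹ * (f * e) * (f * e)⁻¹) * f := by
          simp only [as]
          rw [bidem_pull hS hf, bidem_pull hS he]
        rw [this, bimi hS]
    have h2' : IsIdem (f * e)⁻¹ := by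
      unfold IsIdem
      conv_lhs => rw [← h1']
      have : e * (f * e)⁻¹ * f * (e * (f * e)⁻¹ * f)
          = e * ((f * e)⁻¹ * (f * e) * (f * e)⁻¹) * f := by
        simp only [as]
      rw [this, bimi hS, h1']
    have := bidem_inv hS h2'
    rw [binv_inv hS] at this
    rw [this]; exact h2'
  -- step 5 : f*e = (e*f)⁻¹ = e*f
  have h5 : f * e = (e * f)⁻¹ := by
    apply hS.toInvSemigroupZero.inv_unique
    · show e * f * (f * e) * (e * f) = e * f
      simp only [as]
      rw [bidem_pull hS hf, bidem_pull hS he, ← as e f]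
      exact h3
    · show f * e * (e * f) * (f * e) = f * e
      simp only [as]
      rw [bidem_pull hS he, bidem_pull hS hf, ← as f e]
      exact h4
  rw [h5, bidem_inv hS h3]

private theorem bidem_mul (hS : BooleanInvSemigroup S) {e f : S} (he : IsIdem e)
    (hf : IsIdem f) : IsIdem (e * f) := by
  unfold IsIdem
  rw [bas hS, ← bas hS f e f, bidem_comm hS hf he, bas hS, hf, ← bas hS, he]

private theorem bdd_idem (hS : BooleanInvSemigroup S) (a : S) : IsIdem (a⁻¹ * a) := by
  show a⁻¹ * a * (a⁻¹ * a) = a⁻¹ * a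
  rw [← bas hS (a⁻¹*a) a⁻¹ a, bimi hS]

private theorem brr_idem (hS : BooleanInvSemigroup S) (a : S) : IsIdem (a * a⁻¹) := by
  show a * a⁻¹ * (a * a⁻¹) = a * a⁻¹
  rw [← bas hS (a*a⁻¹) a a⁻¹, bmim hS]

private theorem bmul_dd (hS : BooleanInvSemigroup S) (a : S) : a * (a⁻¹ * a) = a := by
  rw [← bas hS, bmim hS]

private theorem bswap (hS : BooleanInvSemigroup S) {p q : S} (hp : IsIdem p) (hq : IsIdem q)
    (z : S) : p * (q * z) = q * (p * z) := by
  rw [← bas hS, bidem_comm hS hp hq, bas hS]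

private theorem bmul_inv_rev (hS : BooleanInvSemigroup S) (a b : S) : (a * b)⁻¹ = b⁻¹ * a⁻¹ := by
  have as := bas hS
  symm
  apply hS.toInvSemigroupZero.inv_unique
  · have h1 : a * b * (b⁻¹ * a⁻¹) * (a * b) = a * ((b * b⁻¹) * ((a⁻¹ * a) * b)) := by
      simp only [as]
    rw [h1, bswap hS (brr_idem hS b) (bdd_idem hS a) b, bmim hS b,
      ← as a (a⁻¹*a) b, bmul_dd hS a]
  · have h1 : b⁻¹ * a⁻¹ * (a * b) * (b⁻¹ * a⁻¹) = b⁻¹ * ((a⁻¹ * a) * ((b * b⁻¹) * a⁻¹)) := by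
      simp only [as]
    rw [h1, bswap hS (bdd_idem hS a) (brr_idem hS b) a⁻¹, bimi hS a,
      ← as b⁻¹ (b*b⁻¹) a⁻¹, ← as b⁻¹ b b⁻¹, bimi hS b]

private theorem bnatLe_refl (hS : BooleanInvSemigroup S) (a : S) : natLe a a :=
  ⟨a⁻¹ * a, bdd_idem hS a, (bmul_dd hS a).symm⟩

private theorem bnatLe_dd (hS : BooleanInvSemigroup S) {s t : S} (h : natLe s t) :
    s = t * (s⁻¹ * s) := by
  obtain ⟨e, he, rfl⟩ := h
  have as := bas hS
  rw [bmul_inv_rev hS, bidem_inv hS he]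
  rw [as e t⁻¹ (t*e), ← as t⁻¹ t e, ← as e (t⁻¹*t) e,
      bidem_comm hS he (bdd_idem hS t), as (t⁻¹*t) e e, he,
      ← as t (t⁻¹*t) e, bmul_dd hS t]

private theorem bnatLe_rr (hS : BooleanInvSemigroup S) {s t : S} (h : natLe s t) :
    s = s * s⁻¹ * t := by
  obtain ⟨e, he, rfl⟩ := h
  have as := bas hS
  rw [bmul_inv_rev hS, bidem_inv hS he]
  -- ⊢ t * e = t * e * (e * t⁻¹) * t
  have h1 : t * e * (e * t⁻¹) * t = t * (e * (e * (t⁻¹ * t))) := by simp only [as]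
  rw [h1, bidem_pull hS he, bidem_comm hS he (bdd_idem hS t), ← as t (t⁻¹*t) e, bmul_dd hS t]

private theorem bnatLe_of_left (hS : BooleanInvSemigroup S) {s t f : S} (hf : IsIdem f)
    (h : s = f * t) : natLe s t := by
  refine ⟨t⁻¹ * (f * t), ?_, ?_⟩
  · show t⁻¹ * (f * t) * (t⁻¹ * (f * t)) = t⁻¹ * (f * t)
    have h1 : t⁻¹ * (f * t) * (t⁻¹ * (f * t)) = t⁻¹ * (f * ((t * t⁻¹) * (f * t))) := by
      simp only [bas hS]
    rw [h1, bswap hS (brr_idem hS t) hf t, bmim hS t, bidem_pull hS hf t]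
  · rw [h, ← bas hS t t⁻¹ (f*t), bswap hS (brr_idem hS t) hf t, bmim hS t]

private theorem bnatLe_left (hS : BooleanInvSemigroup S) {s t : S} (h : natLe s t) :
    ∃ f, IsIdem f ∧ s = f * t :=
  ⟨s * s⁻¹, brr_idem hS s, bnatLe_rr hS h⟩

private theorem bnatLe_trans (hS : BooleanInvSemigroup S) {s t u : S} (h1 : natLe s t)
    (h2 : natLe t u) : natLe s u := by
  obtain ⟨e, he, rfl⟩ := h1
  obtain ⟨f, hf, rfl⟩ := h2
  exact ⟨f * e, bidem_mul hS hf he, bas hS u f e⟩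

private theorem bnatLe_zero (hS : BooleanInvSemigroup S) (t : S) : natLe 0 t :=
  ⟨0, bzm hS 0, (bmz hS t).symm⟩

private theorem bnatLe_mul_left (hS : BooleanInvSemigroup S) (x : S) {s t : S}
    (h : natLe s t) : natLe (x * s) (x * t) := by
  obtain ⟨e, he, rfl⟩ := h
  exact ⟨e, he, (bas hS x t e).symm⟩

private theorem bnatLe_mul_right (hS : BooleanInvSemigroup S) (x : S) {s t : S}
    (h : natLe s t) : natLe (s * x) (t * x) := by
  obtain ⟨f, hf, hs⟩ := bnatLe_left hS h
  exact bnatLe_of_left hS hf (by rw [hs, bas hS])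

private theorem bnatLe_inv (hS : BooleanInvSemigroup S) {s t : S} (h : natLe s t) :
    natLe s⁻¹ t⁻¹ := by
  obtain ⟨e, he, rfl⟩ := h
  exact bnatLe_of_left hS he (by rw [bmul_inv_rev hS, bidem_inv hS he])

private theorem bdd_mono (hS : BooleanInvSemigroup S) {s t : S} (h : natLe s t) :
    natLe (s⁻¹ * s) (t⁻¹ * t) := by
  obtain ⟨e, he, rfl⟩ := h
  refine ⟨e, he, ?_⟩
  rw [bmul_inv_rev hS, bidem_inv hS he]
  rw [bas hS e t⁻¹ (t*e), ← bas hS t⁻¹ t e, bswap hS he (bdd_idem hS t) e, he]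

private theorem bidem_le_mul (hS : BooleanInvSemigroup S) {e f : S} (he : IsIdem e)
    (hf : IsIdem f) (h : natLe e f) : f * e = e ∧ e * f = e := by
  obtain ⟨g, hg, hfg⟩ := h
  constructor
  · rw [hfg, bidem_pull hS hf]
  · rw [hfg, bas hS, bidem_comm hS hg hf, bidem_pull hS hf]

private theorem bnatLe_antisymm (hS : BooleanInvSemigroup S) {s t : S} (h1 : natLe s t)
    (h2 : natLe t s) : s = t := by
  have e1 := bidem_le_mul hS (bdd_idem hS s) (bdd_idem hS t) (bdd_mono hS h1)
  have e2 := bidem_le_mul hS (bdd_idem hS t) (bdd_idem hS s) (bdd_mono hS h2)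
  have hdd : s⁻¹ * s = t⁻¹ * t := e1.2.symm.trans e2.1
  calc s = t * (s⁻¹ * s) := bnatLe_dd hS h1
    _ = t * (t⁻¹ * t) := by rw [hdd]
    _ = t := bmul_dd hS t

private theorem bidem_of_le (hS : BooleanInvSemigroup S) {x e : S} (he : IsIdem e)
    (h : natLe x e) : IsIdem x := by
  obtain ⟨g, hg, hx⟩ := h
  rw [hx]; exact bidem_mul hS he hg

private theorem bcompat_idem (hS : BooleanInvSemigroup S) {e f : S} (he : IsIdem e)
    (hf : IsIdem f) : Compat e f :=
  ⟨by rw [bidem_inv hS he]; exact bidem_mul hS he hf,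
   by rw [bidem_inv hS hf]; exact bidem_mul hS he hf⟩

private theorem bcompat_of_le (hS : BooleanInvSemigroup S) {a b u : S} (ha : natLe a u)
    (hb : natLe b u) : Compat a b := by
  obtain ⟨e, he, rfl⟩ := ha
  obtain ⟨f, hf, rfl⟩ := hb
  constructor
  · rw [bmul_inv_rev hS, bidem_inv hS he]
    have h1 : e * u⁻¹ * (u * f) = e * ((u⁻¹ * u) * f) := by simp only [bas hS]
    rw [h1]
    exact bidem_mul hS he (bidem_mul hS (bdd_idem hS u) hf)
  · rw [bmul_inv_rev hS, bidem_inv hS hf]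
    have hw : IsIdem (e * f) := bidem_mul hS he hf
    show u * e * (f * u⁻¹) * (u * e * (f * u⁻¹)) = u * e * (f * u⁻¹)
    have h1 : u * e * (f * u⁻¹) * (u * e * (f * u⁻¹))
        = u * ((e * f) * ((u⁻¹ * u) * ((e * f) * u⁻¹))) := by simp only [bas hS]
    rw [h1, bswap hS (bdd_idem hS u) hw u⁻¹, bidem_pull hS hw, bimi hS]
    simp only [bas hS]

private theorem bcompat_of_orth (hS : BooleanInvSemigroup S) {a b : S}
    (h1 : a⁻¹ * b = 0) (h2 : a * b⁻¹ = 0) : Compat a b := by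
  constructor
  · show a⁻¹ * b * (a⁻¹ * b) = a⁻¹ * b
    rw [h1, bzm hS]
  · show a * b⁻¹ * (a * b⁻¹) = a * b⁻¹
    rw [h2, bzm hS]

private theorem bcompat_symm (hS : BooleanInvSemigroup S) {a b : S} (h : Compat a b) :
    Compat b a := by
  have h1 : b⁻¹ * a = a⁻¹ * b := by
    conv_lhs => rw [← binv_inv hS a]
    rw [← bmul_inv_rev hS, bidem_inv hS h.1]
  have h2 : b * a⁻¹ = a * b⁻¹ := by
    conv_lhs => rw [← binv_inv hS b]
    rw [← bmul_inv_rev hS, bidem_inv hS h.2]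
  exact ⟨by rw [h1]; exact h.1, by rw [h2]; exact h.2⟩

private theorem bcompat_zero_left (hS : BooleanInvSemigroup S) (z : S) : Compat 0 z :=
  bcompat_of_orth hS (by rw [bzero_inv hS, bzm hS]) (bzm hS z⁻¹)

private theorem bzero_sup (hS : BooleanInvSemigroup S) (z : S) : 0 ⊔ z = z := by
  apply bnatLe_antisymm hS
  · exact hS.sup_le 0 z z (bcompat_zero_left hS z) (bnatLe_zero hS z) (bnatLe_refl hS z)
  · exact hS.le_sup_right 0 z (bcompat_zero_left hS z)

private theorem bsup_bound (hS : BooleanInvSemigroup S) {a b u : S} (ha : natLe a u)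
    (hb : natLe b u) : natLe (a ⊔ b) u :=
  hS.sup_le a b u (bcompat_of_le hS ha hb) ha hb

private theorem bsup_assoc3 (hS : BooleanInvSemigroup S) {a b c u : S} (ha : natLe a u)
    (hb : natLe b u) (hc : natLe c u) : (a ⊔ b) ⊔ c = a ⊔ (b ⊔ c) := by
  have hab := bsup_bound hS ha hb
  have hbc := bsup_bound hS hb hc
  have cab := bcompat_of_le hS ha hb
  have cbc := bcompat_of_le hS hb hc
  have c_ab_c := bcompat_of_le hS hab hc
  have c_a_bc := bcompat_of_le hS ha hbc
  apply bnatLe_antisymm hS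
  · apply hS.sup_le _ _ _ c_ab_c
    · apply hS.sup_le _ _ _ cab
      · exact hS.le_sup_left a (b ⊔ c) c_a_bc
      · exact bnatLe_trans hS (hS.le_sup_left b c cbc) (hS.le_sup_right a (b ⊔ c) c_a_bc)
    · exact bnatLe_trans hS (hS.le_sup_right b c cbc) (hS.le_sup_right a (b ⊔ c) c_a_bc)
  · apply hS.sup_le _ _ _ c_a_bc
    · exact bnatLe_trans hS (hS.le_sup_left a b cab) (hS.le_sup_left (a ⊔ b) c c_ab_c)
    · apply hS.sup_le _ _ _ cbc
      · exact bnatLe_trans hS (hS.le_sup_right a b cab) (hS.le_sup_left (a ⊔ b) c c_ab_c)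
      · exact hS.le_sup_right (a ⊔ b) c c_ab_c

private theorem bsdiff_unique (hS : BooleanInvSemigroup S) {a c x : S} (hc : natLe c a)
    (hx : natLe x a) (ho1 : c⁻¹ * x = 0) (ho2 : c * x⁻¹ = 0) (hsup : c ⊔ x = a) :
    x = a \ c := by
  have hy : natLe (a \ c) a := hS.sdiff_le a c hc
  have horth := hS.sdiff_orth a c hc
  have hcy : Compat c (a \ c) := bcompat_of_le hS hc hy
  have hcx : Compat c x := bcompat_of_le hS hc hx
  apply bnatLe_antisymm hS
  · have h2 : c * (x⁻¹ * x) = 0 := by rw [← bas hS, ho2, bzm hS]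
    have h3 : a * (x⁻¹ * x) = (a \ c) * (x⁻¹ * x) := by
      calc a * (x⁻¹ * x) = (c ⊔ (a \ c)) * (x⁻¹ * x) := by rw [hS.sup_sdiff a c hc]
        _ = c * (x⁻¹ * x) ⊔ (a \ c) * (x⁻¹ * x) := hS.sup_mul _ _ _ hcy
        _ = (a \ c) * (x⁻¹ * x) := by rw [h2, bzero_sup hS]
    exact ⟨x⁻¹ * x, bdd_idem hS x, by rw [← h3, ← bnatLe_dd hS hx]⟩
  · have h2 : c * ((a \ c)⁻¹ * (a \ c)) = 0 := by rw [← bas hS, horth.2, bzm hS]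
    have h3 : a * ((a \ c)⁻¹ * (a \ c)) = x * ((a \ c)⁻¹ * (a \ c)) := by
      calc a * ((a \ c)⁻¹ * (a \ c)) = (c ⊔ x) * ((a \ c)⁻¹ * (a \ c)) := by rw [hsup]
        _ = c * ((a \ c)⁻¹ * (a \ c)) ⊔ x * ((a \ c)⁻¹ * (a \ c)) := hS.sup_mul _ _ _ hcx
        _ = x * ((a \ c)⁻¹ * (a \ c)) := by rw [h2, bzero_sup hS]
    exact ⟨(a \ c)⁻¹ * (a \ c), bdd_idem hS (a \ c), by rw [← h3, ← bnatLe_dd hS hy]⟩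

private theorem bsdiff_sup_le (hS : BooleanInvSemigroup S) {c x : S} (h : Compat c x) :
    natLe ((c ⊔ x) \ c) x := by
  have hc : natLe c (c ⊔ x) := hS.le_sup_left c x h
  have horth := hS.sdiff_orth (c ⊔ x) c hc
  have hple : natLe ((c ⊔ x) \ c) (c ⊔ x) := hS.sdiff_le _ _ hc
  have h2 : c * (((c ⊔ x) \ c)⁻¹ * ((c ⊔ x) \ c)) = 0 := by
    rw [← bas hS, horth.2, bzm hS]
  have h3 : (c ⊔ x) * (((c ⊔ x) \ c)⁻¹ * ((c ⊔ x) \ c))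
      = x * (((c ⊔ x) \ c)⁻¹ * ((c ⊔ x) \ c)) := by
    rw [hS.sup_mul _ _ _ h, h2, bzero_sup hS]
  exact ⟨((c ⊔ x) \ c)⁻¹ * ((c ⊔ x) \ c), bdd_idem hS _, by rw [← h3, ← bnatLe_dd hS hple]⟩

private theorem bsdiff_self (hS : BooleanInvSemigroup S) (a : S) : a \ a = 0 := by
  have hle := hS.sdiff_le a a (bnatLe_refl hS a)
  have horth := hS.sdiff_orth a a (bnatLe_refl hS a)
  have h1 : a \ a = a * ((a \ a)⁻¹ * (a \ a)) := bnatLe_dd hS hle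
  rw [h1, ← bas hS, horth.2, bzm hS]

private theorem bsdiff_zero (hS : BooleanInvSemigroup S) (a : S) : a \ 0 = a := by
  symm
  apply bsdiff_unique hS (bnatLe_zero hS a) (bnatLe_refl hS a)
  · rw [bzero_inv hS, bzm hS]
  · exact bzm hS a⁻¹
  · exact bzero_sup hS a

private theorem bzero_mem (hS : BooleanInvSemigroup S) {I : Set S} (hI : AddIdeal I) :
    (0 : S) ∈ I := by
  obtain ⟨⟨x, hx⟩, hmul, -⟩ := hI
  have := (hmul x hx 0).2
  rwa [bmz hS] at this

private theorem bideal_down (hS : BooleanInvSemigroup S) {I : Set S} (hI : AddIdeal I)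
    {x y : S} (h : natLe x y) (hy : y ∈ I) : x ∈ I := by
  obtain ⟨e, -, rfl⟩ := h
  exact (hI.2.1 y hy e).2

private theorem bsdiff_formula (hS : BooleanInvSemigroup S) {a c : S} (h : natLe c a) :
    a \ c = a * ((a⁻¹ * a) \ (c⁻¹ * c)) := by
  have as := bas hS
  have hdc : natLe (c⁻¹ * c) (a⁻¹ * a) := bdd_mono hS h
  have he'le : natLe ((a⁻¹ * a) \ (c⁻¹ * c)) (a⁻¹ * a) := hS.sdiff_le _ _ hdc
  have he' : IsIdem ((a⁻¹ * a) \ (c⁻¹ * c)) := bidem_of_le hS (bdd_idem hS a) he'le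
  have hda_e' : (a⁻¹ * a) * ((a⁻¹ * a) \ (c⁻¹ * c)) = (a⁻¹ * a) \ (c⁻¹ * c) :=
    (bidem_le_mul hS he' (bdd_idem hS a) he'le).1
  have hdc_e' : (c⁻¹ * c) * ((a⁻¹ * a) \ (c⁻¹ * c)) = 0 := by
    have := (hS.sdiff_orth _ _ hdc).1
    rwa [bidem_inv hS (bdd_idem hS c)] at this
  have hc_eq : c = a * (c⁻¹ * c) := bnatLe_dd hS h
  have hcinv : c⁻¹ = (c⁻¹ * c) * a⁻¹ := by
    calc c⁻¹ = (a * (c⁻¹ * c))⁻¹ := by rw [← hc_eq]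
      _ = (c⁻¹ * c)⁻¹ * a⁻¹ := bmul_inv_rev hS _ _
      _ = (c⁻¹ * c) * a⁻¹ := by rw [bidem_inv hS (bdd_idem hS c)]
  symm
  apply bsdiff_unique hS h ⟨(a⁻¹ * a) \ (c⁻¹ * c), he', rfl⟩
  · calc c⁻¹ * (a * ((a⁻¹ * a) \ (c⁻¹ * c)))
        = ((c⁻¹ * c) * a⁻¹) * (a * ((a⁻¹ * a) \ (c⁻¹ * c))) := by rw [← hcinv]
      _ = (c⁻¹ * c) * ((a⁻¹ * a) * ((a⁻¹ * a) \ (c⁻¹ * c))) := by simp only [as]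
      _ = (c⁻¹ * c) * ((a⁻¹ * a) \ (c⁻¹ * c)) := by rw [hda_e']
      _ = 0 := hdc_e'
  · rw [bmul_inv_rev hS, bidem_inv hS he']
    calc c * (((a⁻¹ * a) \ (c⁻¹ * c)) * a⁻¹)
        = (a * (c⁻¹ * c)) * (((a⁻¹ * a) \ (c⁻¹ * c)) * a⁻¹) := by rw [← hc_eq]
      _ = a * (((c⁻¹ * c) * ((a⁻¹ * a) \ (c⁻¹ * c))) * a⁻¹) := by simp only [as]
      _ = a * (0 * a⁻¹) := by rw [hdc_e']
      _ = 0 := by rw [bzm hS, bmz hS]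
  · calc c ⊔ a * ((a⁻¹ * a) \ (c⁻¹ * c))
        = a * (c⁻¹ * c) ⊔ a * ((a⁻¹ * a) \ (c⁻¹ * c)) := by rw [← hc_eq]
      _ = a * ((c⁻¹ * c) ⊔ ((a⁻¹ * a) \ (c⁻¹ * c))) :=
        (hS.mul_sup a _ _ (bcompat_idem hS (bdd_idem hS c) he')).symm
      _ = a * (a⁻¹ * a) := by rw [hS.sup_sdiff _ _ hdc]
      _ = a := bmul_dd hS a

private theorem bkey_idem (hS : BooleanInvSemigroup S) {u f g : S} (hu : IsIdem u)
    (hf : IsIdem f) (hg : IsIdem g) (hfu : natLe f u) (hgu : natLe g u) :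
    natLe (f \ (f * g)) (u \ g) := by
  have as := bas hS
  have hfg : IsIdem (f * g) := bidem_mul hS hf hg
  have hfgf : natLe (f * g) f := ⟨g, hg, rfl⟩
  have hp_le : natLe (f \ (f * g)) f := hS.sdiff_le f (f * g) hfgf
  have hp : IsIdem (f \ (f * g)) := bidem_of_le hS hf hp_le
  have hpf : f * (f \ (f * g)) = f \ (f * g) := (bidem_le_mul hS hp hf hp_le).1
  have hguq := hS.sup_sdiff u g hgu
  have hugorth := hS.sdiff_orth u g hgu
  have hug_le : natLe (u \ g) u := hS.sdiff_le u g hgu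
  have hug : IsIdem (u \ g) := bidem_of_le hS hu hug_le
  have hpu : natLe (f \ (f * g)) u := bnatLe_trans hS hp_le hfu
  have hpu2 : (f \ (f * g)) * u = f \ (f * g) := (bidem_le_mul hS hp hu hpu).2
  have hfgp : (f * g) * (f \ (f * g)) = 0 := by
    have := (hS.sdiff_orth f (f * g) hfgf).1
    rwa [bidem_inv hS hfg] at this
  have hpfg : (f \ (f * g)) * (f * g) = 0 := by rw [bidem_comm hS hp hfg, hfgp]
  have hpg : (f \ (f * g)) * g = 0 := by
    have h1 : (f \ (f * g)) * g = (f \ (f * g)) * (f * g) := by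
      conv_lhs => rw [← hpf]
      rw [bidem_comm hS hf hp, as]
    rw [h1, hpfg]
  have cg : Compat g (u \ g) := by
    apply bcompat_of_orth hS
    · exact hugorth.1
    · rw [bidem_inv hS hug]
      have := hugorth.1
      rw [bidem_inv hS hg] at this
      exact this
  have hmain : f \ (f * g) = (f \ (f * g)) * (u \ g) := by
    conv_lhs => rw [← hpu2, ← hguq]
    rw [hS.mul_sup _ _ _ cg, hpg, bzero_sup hS]
  have hfin : (u \ g) * (f \ (f * g)) = f \ (f * g) := by
    rw [bidem_comm hS hug hp, ← hmain]
  exact ⟨f \ (f * g), hp, hfin.symm⟩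

private theorem bepsI_intro (hS : BooleanInvSemigroup S) {I : Set S} (hI : AddIdeal I)
    {c x y a b : S} (hx : x ∈ I) (hy : y ∈ I) (hcx : Compat c x) (hcy : Compat c y)
    (ha : a = c ⊔ x) (hb : b = c ⊔ y) : epsI I a b := by
  refine ⟨c, ?_, ?_, ?_, ?_⟩
  · rw [ha]; exact hS.le_sup_left c x hcx
  · rw [hb]; exact hS.le_sup_left c y hcy
  · refine bideal_down hS hI ?_ hx
    rw [ha]; exact bsdiff_sup_le hS hcx
  · refine bideal_down hS hI ?_ hy
    rw [hb]; exact bsdiff_sup_le hS hcy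

private theorem bepsI_elim (hS : BooleanInvSemigroup S) {I : Set S} {a b : S}
    (h : epsI I a b) :
    ∃ c x y, x ∈ I ∧ y ∈ I ∧ Compat c x ∧ Compat c y ∧ a = c ⊔ x ∧ b = c ⊔ y := by
  obtain ⟨c, hca, hcb, hac, hbc⟩ := h
  exact ⟨c, a \ c, b \ c, hac, hbc,
    bcompat_of_le hS hca (hS.sdiff_le a c hca),
    bcompat_of_le hS hcb (hS.sdiff_le b c hcb),
    (hS.sup_sdiff a c hca).symm, (hS.sup_sdiff b c hcb).symm⟩

private theorem bepsI_refl (hS : BooleanInvSemigroup S) {I : Set S} (hI : AddIdeal I)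
    (a : S) : epsI I a a :=
  ⟨a, bnatLe_refl hS a, bnatLe_refl hS a,
    by rw [bsdiff_self hS]; exact bzero_mem hS hI,
    by rw [bsdiff_self hS]; exact bzero_mem hS hI⟩

private theorem bepsI_symm {I : Set S} {a b : S} (h : epsI I a b) : epsI I b a := by
  obtain ⟨c, h1, h2, h3, h4⟩ := h
  exact ⟨c, h2, h1, h4, h3⟩

private theorem baux_half (hS : BooleanInvSemigroup S) {I : Set S} (hI : AddIdeal I)
    {a b p q : S} (hpa : natLe p a) (hpb : natLe p b) (hqb : natLe q b)
    (hap : (a \ p) ∈ I) (hbq : (b \ q) ∈ I) : (a \ (p * (q⁻¹ * q))) ∈ I := by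
  have hm_p : natLe (p * (q⁻¹ * q)) p := ⟨q⁻¹ * q, bdd_idem hS q, rfl⟩
  have hp_eq : p = b * (p⁻¹ * p) := bnatLe_dd hS hpb
  have hdm : (p * (q⁻¹ * q))⁻¹ * (p * (q⁻¹ * q)) = (p⁻¹ * p) * (q⁻¹ * q) := by
    rw [bmul_inv_rev hS, bidem_inv hS (bdd_idem hS q)]
    rw [bas hS (q⁻¹*q) p⁻¹ (p * (q⁻¹*q)), ← bas hS p⁻¹ p (q⁻¹*q),
        bswap hS (bdd_idem hS q) (bdd_idem hS p) (q⁻¹*q)]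
    rw [show (q⁻¹*q) * (q⁻¹*q) = q⁻¹*q from bdd_idem hS q]
  have hpm_le_bq : natLe (p \ (p * (q⁻¹ * q))) (b \ q) := by
    have hkey := bkey_idem hS (bdd_idem hS b) (bdd_idem hS p) (bdd_idem hS q)
        (bdd_mono hS hpb) (bdd_mono hS hqb)
    have he1le : natLe ((p⁻¹*p) \ ((p⁻¹*p)*(q⁻¹*q))) (p⁻¹*p) :=
      hS.sdiff_le _ _ ⟨q⁻¹*q, bdd_idem hS q, rfl⟩
    have he1 : IsIdem ((p⁻¹*p) \ ((p⁻¹*p)*(q⁻¹*q))) := bidem_of_le hS (bdd_idem hS p) he1le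
    have habs : (p⁻¹*p) * ((p⁻¹*p) \ ((p⁻¹*p)*(q⁻¹*q))) = (p⁻¹*p) \ ((p⁻¹*p)*(q⁻¹*q)) :=
      (bidem_le_mul hS he1 (bdd_idem hS p) he1le).1
    have h1 : p \ (p * (q⁻¹*q)) = p * ((p⁻¹*p) \ ((p⁻¹*p)*(q⁻¹*q))) := by
      rw [bsdiff_formula hS hm_p, hdm]
    have h3 : p * ((p⁻¹*p) \ ((p⁻¹*p)*(q⁻¹*q))) = b * ((p⁻¹*p) \ ((p⁻¹*p)*(q⁻¹*q))) := by
      calc p * ((p⁻¹*p) \ ((p⁻¹*p)*(q⁻¹*q)))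
          = (b * (p⁻¹*p)) * ((p⁻¹*p) \ ((p⁻¹*p)*(q⁻¹*q))) := by rw [← hp_eq]
        _ = b * ((p⁻¹*p) * ((p⁻¹*p) \ ((p⁻¹*p)*(q⁻¹*q)))) := bas hS _ _ _
        _ = b * ((p⁻¹*p) \ ((p⁻¹*p)*(q⁻¹*q))) := by rw [habs]
    rw [h1, h3, bsdiff_formula hS hqb]
    exact bnatLe_mul_left hS b hkey
  have hpmI : (p \ (p * (q⁻¹*q))) ∈ I := bideal_down hS hI hpm_le_bq hbq
  have hm_le_a : natLe (p * (q⁻¹*q)) a := bnatLe_trans hS hm_p hpa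
  have hpm_le_a : natLe (p \ (p * (q⁻¹*q))) a := bnatLe_trans hS (hS.sdiff_le _ _ hm_p) hpa
  have hap_le_a : natLe (a \ p) a := hS.sdiff_le a p hpa
  have hxI : ((p \ (p * (q⁻¹*q))) ⊔ (a \ p)) ∈ I :=
    hI.2.2 _ hpmI _ hap (bcompat_of_le hS hpm_le_a hap_le_a)
  have h4 : p ⊔ (a \ p) = ((p * (q⁻¹*q)) ⊔ (p \ (p * (q⁻¹*q)))) ⊔ (a \ p) := by
    rw [hS.sup_sdiff p _ hm_p]
  have haeq : a = (p * (q⁻¹*q)) ⊔ ((p \ (p * (q⁻¹*q))) ⊔ (a \ p)) := by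
    rw [← bsup_assoc3 hS hm_le_a hpm_le_a hap_le_a, ← h4, hS.sup_sdiff a p hpa]
  have hle : natLe (a \ (p * (q⁻¹*q))) ((p \ (p * (q⁻¹*q))) ⊔ (a \ p)) := by
    have hcmx : Compat (p * (q⁻¹*q)) ((p \ (p * (q⁻¹*q))) ⊔ (a \ p)) :=
      bcompat_of_le hS hm_le_a (bsup_bound hS hpm_le_a hap_le_a)
    have h5 := bsdiff_sup_le hS hcmx
    rwa [← haeq] at h5
  exact bideal_down hS hI hle hxI

private theorem bepsI_trans (hS : BooleanInvSemigroup S) {I : Set S} (hI : AddIdeal I)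
    {a b c : S} (h1 : epsI I a b) (h2 : epsI I b c) : epsI I a c := by
  obtain ⟨p, hpa, hpb, hap, hbp⟩ := h1
  obtain ⟨q, hqb, hqc, hbq, hcq⟩ := h2
  have hp_eq : p = b * (p⁻¹ * p) := bnatLe_dd hS hpb
  have hq_eq : q = b * (q⁻¹ * q) := bnatLe_dd hS hqb
  have hmkey : p * (q⁻¹ * q) = q * (p⁻¹ * p) := by
    calc p * (q⁻¹*q) = b * (p⁻¹*p) * (q⁻¹*q) := by rw [← hp_eq]
      _ = b * ((q⁻¹*q) * (p⁻¹*p)) := by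
          rw [bas hS, bidem_comm hS (bdd_idem hS p) (bdd_idem hS q)]
      _ = b * (q⁻¹*q) * (p⁻¹*p) := (bas hS _ _ _).symm
      _ = q * (p⁻¹*p) := by rw [← hq_eq]
  have hm_q : natLe (p * (q⁻¹*q)) q := by
    rw [hmkey]; exact ⟨p⁻¹*p, bdd_idem hS p, rfl⟩
  have half1 : (a \ (p * (q⁻¹*q))) ∈ I := baux_half hS hI hpa hpb hqb hap hbq
  have half2 : (c \ (q * (p⁻¹*p))) ∈ I := baux_half hS hI hqc hqb hpb hcq hbp
  rw [← hmkey] at half2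
  exact ⟨p * (q⁻¹*q), bnatLe_trans hS ⟨q⁻¹*q, bdd_idem hS q, rfl⟩ hpa,
    bnatLe_trans hS hm_q hqc, half1, half2⟩

private theorem bmul_decomp (hS : BooleanInvSemigroup S) {a b c d x y : S}
    (hcx : Compat c x) (hdy : Compat d y) (ha : a = c ⊔ x) (hb : b = d ⊔ y) :
    a * b = (c * d) ⊔ ((x * d) ⊔ (a * y)) := by
  have hca : natLe c a := by rw [ha]; exact hS.le_sup_left c x hcx
  have hxa : natLe x a := by rw [ha]; exact hS.le_sup_right c x hcx
  have hdb : natLe d b := by rw [hb]; exact hS.le_sup_left d y hdy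
  have hyb : natLe y b := by rw [hb]; exact hS.le_sup_right d y hdy
  have h1 : a * b = (a * d) ⊔ (a * y) := by
    conv_lhs => rw [hb]
    exact hS.mul_sup a d y hdy
  have h2 : a * d = (c * d) ⊔ (x * d) := by
    conv_lhs => rw [ha]
    exact hS.sup_mul c x d hcx
  have hcd : natLe (c * d) (a * b) :=
    bnatLe_trans hS (bnatLe_mul_right hS d hca) (bnatLe_mul_left hS a hdb)
  have hxd : natLe (x * d) (a * b) :=
    bnatLe_trans hS (bnatLe_mul_right hS d hxa) (bnatLe_mul_left hS a hdb)
  have hay : natLe (a * y) (a * b) := bnatLe_mul_left hS a hyb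
  rw [h1, h2]
  exact bsup_assoc3 hS hcd hxd hay

private theorem bepsI_mul (hS : BooleanInvSemigroup S) {I : Set S} (hI : AddIdeal I)
    {a a' b b' : S} (h1 : epsI I a a') (h2 : epsI I b b') : epsI I (a * b) (a' * b') := by
  obtain ⟨c, x, x', hx, hx', hcx, hcx', ha, ha'⟩ := bepsI_elim hS h1
  obtain ⟨d, y, y', hy, hy', hdy, hdy', hb, hb'⟩ := bepsI_elim hS h2
  have d1 := bmul_decomp hS hcx hdy ha hb
  have d2 := bmul_decomp hS hcx' hdy' ha' hb'
  -- bounds for the unprimed product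
  have hca : natLe c a := by rw [ha]; exact hS.le_sup_left c x hcx
  have hxa : natLe x a := by rw [ha]; exact hS.le_sup_right c x hcx
  have hdb : natLe d b := by rw [hb]; exact hS.le_sup_left d y hdy
  have hyb : natLe y b := by rw [hb]; exact hS.le_sup_right d y hdy
  have hcd : natLe (c * d) (a * b) :=
    bnatLe_trans hS (bnatLe_mul_right hS d hca) (bnatLe_mul_left hS a hdb)
  have hxd : natLe (x * d) (a * b) :=
    bnatLe_trans hS (bnatLe_mul_right hS d hxa) (bnatLe_mul_left hS a hdb)
  have hay : natLe (a * y) (a * b) := bnatLe_mul_left hS a hyb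
  -- bounds for the primed product
  have hca' : natLe c a' := by rw [ha']; exact hS.le_sup_left c x' hcx'
  have hxa' : natLe x' a' := by rw [ha']; exact hS.le_sup_right c x' hcx'
  have hdb' : natLe d b' := by rw [hb']; exact hS.le_sup_left d y' hdy'
  have hyb' : natLe y' b' := by rw [hb']; exact hS.le_sup_right d y' hdy'
  have hcd' : natLe (c * d) (a' * b') :=
    bnatLe_trans hS (bnatLe_mul_right hS d hca') (bnatLe_mul_left hS a' hdb')
  have hxd' : natLe (x' * d) (a' * b') :=
    bnatLe_trans hS (bnatLe_mul_right hS d hxa') (bnatLe_mul_left hS a' hdb')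
  have hay' : natLe (a' * y') (a' * b') := bnatLe_mul_left hS a' hyb'
  -- memberships
  have hxdI : (x * d) ∈ I := (hI.2.1 x hx d).2
  have hayI : (a * y) ∈ I := (hI.2.1 y hy a).1
  have hXI : ((x * d) ⊔ (a * y)) ∈ I := hI.2.2 _ hxdI _ hayI (bcompat_of_le hS hxd hay)
  have hxdI' : (x' * d) ∈ I := (hI.2.1 x' hx' d).2
  have hayI' : (a' * y') ∈ I := (hI.2.1 y' hy' a').1
  have hXI' : ((x' * d) ⊔ (a' * y')) ∈ I :=
    hI.2.2 _ hxdI' _ hayI' (bcompat_of_le hS hxd' hay')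
  exact bepsI_intro hS hI hXI hXI'
    (bcompat_of_le hS hcd (bsup_bound hS hxd hay))
    (bcompat_of_le hS hcd' (bsup_bound hS hxd' hay'))
    d1 d2

private theorem bclass_zero (hS : BooleanInvSemigroup S) {I : Set S} (hI : AddIdeal I) :
    {a : S | epsI I a 0} = I := by
  ext a
  simp only [Set.mem_setOf_eq]
  constructor
  · rintro ⟨c, hca, hc0, haI, -⟩
    obtain ⟨e, -, hce⟩ := hc0
    have hc0' : c = 0 := by rw [hce, bzm hS]
    rw [hc0', bsdiff_zero hS] at haI
    exact haI
  · intro ha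
    refine ⟨0, bnatLe_zero hS a, bnatLe_refl hS 0, ?_, ?_⟩
    · rw [bsdiff_zero hS]; exact ha
    · rw [bsdiff_zero hS]; exact bzero_mem hS hI

end EpsHelpers


/-- For an additive ideal `I`, `ε_I` is a congruence whose class of `0` is
exactly `I`, and the quotient map `S → S/ε_I` is weakly meet preserving. -/
theorem epsI_congruence_and_weakly_meet_preserving {S : Type*}
    [Mul S] [Inv S] [Zero S] [Max S] [SDiff S]
    (hS : BooleanInvSemigroup S) (I : Set S) (hI : AddIdeal I) :
    Equivalence (epsI I) ∧
    (∀ a a' b b' : S, epsI I a a' → epsI I b b' → epsI I (a * b) (a' * b')) ∧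
    {a : S | epsI I a 0} = I ∧
    (∀ a b t : S, qle I t a → qle I t b →
      ∃ c : S, natLe c a ∧ natLe c b ∧ qle I t c) := by
  refine ⟨⟨fun a => bepsI_refl hS hI a, fun h => bepsI_symm h,
    fun h1 h2 => bepsI_trans hS hI h1 h2⟩,
    fun a a' b b' h1 h2 => bepsI_mul hS hI h1 h2,
    bclass_zero hS hI, fun a b t h1 h2 => ?_⟩
  obtain ⟨t₁, ht1, ht1a⟩ := h1
  obtain ⟨t₂, ht2, ht2b⟩ := h2
  have h12 : epsI I t₁ t₂ := bepsI_trans hS hI (bepsI_symm ht1) ht2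
  obtain ⟨m, hm1, hm2, h1m, h2m⟩ := h12
  refine ⟨m, bnatLe_trans hS hm1 ht1a, bnatLe_trans hS hm2 ht2b, m, ?_, bnatLe_refl hS m⟩
  have he1m : epsI I t₁ m :=
    ⟨m, hm1, bnatLe_refl hS m, h1m, by rw [bsdiff_self hS]; exact bzero_mem hS hI⟩
  exact bepsI_trans hS hI ht1 he1m
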